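/- A sequence (x_n, r_n) in C × D converges to (x,r) in the metric d_T if and only if r_n → r in ℝ^d and x_n → x uniformly on [-τ̄,T]. -/

import Mathlib

open Set

variable {d : ℕ} {τb T Kτ : ℝ} {D : Set (EuclideanSpace ℝ (Fin d))}

/-- The delay-sup term of the distance `d_T` on `C([-τ̄,T],ℝ) × D`. -/
noncomputable def supTerm (τb T Kτ : ℝ) {d : ℕ} (D : Set (EuclideanSpace ℝ (Fin d)))
    (p q : C(Icc (-τb) T, ℝ) × D) : ℝ :=
  sSup {v : ℝ | ∃ t a b : ℝ, ∃ (ht : t ∈ Icc (0 : ℝ) T) (ha : a ∈ Icc (-τb) (0 : ℝ))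
    (hb : b ∈ Icc (-τb) (0 : ℝ)),
    |b - a| ≤ Kτ * ‖(p.2 : EuclideanSpace ℝ (Fin d)) - (q.2 : EuclideanSpace ℝ (Fin d))‖ ∧
    v = |p.1 ⟨t + a, ⟨by linarith [ht.1, ha.1], by linarith [ht.2, ha.2]⟩⟩ -
         q.1 ⟨t + b, ⟨by linarith [ht.1, hb.1], by linarith [ht.2, hb.2]⟩⟩| ^ 2}

/-- The distance `d_T` on `C([-τ̄,T],ℝ) × D`. -/
noncomputable def dT (τb T Kτ : ℝ) {d : ℕ} (D : Set (EuclideanSpace ℝ (Fin d)))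
    (p q : C(Icc (-τb) T, ℝ) × D) : ℝ :=
  Real.sqrt (‖(p.2 : EuclideanSpace ℝ (Fin d)) - (q.2 : EuclideanSpace ℝ (Fin d))‖ ^ 2 +
    supTerm τb T Kτ D p q)

/-- Every element of the `supTerm` set is nonnegative, hence so is the sup. -/
lemma supTerm_nonneg (p q : C(Icc (-τb) T, ℝ) × D) :
    0 ≤ supTerm τb T Kτ D p q := by
  apply Real.sSup_nonneg
  rintro v ⟨t, a, b, ht, ha, hb, hab, rfl⟩
  positivity

/-- Upper bound criterion for `supTerm`. -/
lemma supTerm_le (p q : C(Icc (-τb) T, ℝ) × D) {c : ℝ} (hc : 0 ≤ c)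
    (h : ∀ s s' : Icc (-τb) T,
      |(s : ℝ) - (s' : ℝ)| ≤ Kτ * ‖(p.2 : EuclideanSpace ℝ (Fin d)) -
        (q.2 : EuclideanSpace ℝ (Fin d))‖ → |p.1 s - q.1 s'| ^ 2 ≤ c) :
    supTerm τb T Kτ D p q ≤ c := by
  apply Real.sSup_le _ hc
  rintro v ⟨t, a, b, ht, ha, hb, hab, rfl⟩
  apply h
  simp only
  have : t + a - (t + b) = -(b - a) := by ring
  rw [this, abs_neg]
  exact hab

/-- `supTerm` is bounded above by a fixed square. -/
lemma supTerm_bddAbove (p q : C(Icc (-τb) T, ℝ) × D) :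
    BddAbove {v : ℝ | ∃ t a b : ℝ, ∃ (ht : t ∈ Icc (0 : ℝ) T) (ha : a ∈ Icc (-τb) (0 : ℝ))
      (hb : b ∈ Icc (-τb) (0 : ℝ)),
      |b - a| ≤ Kτ * ‖(p.2 : EuclideanSpace ℝ (Fin d)) - (q.2 : EuclideanSpace ℝ (Fin d))‖ ∧
      v = |p.1 ⟨t + a, ⟨by linarith [ht.1, ha.1], by linarith [ht.2, ha.2]⟩⟩ -
           q.1 ⟨t + b, ⟨by linarith [ht.1, hb.1], by linarith [ht.2, hb.2]⟩⟩| ^ 2} := by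
  refine ⟨(‖p.1‖ + ‖q.1‖) ^ 2, ?_⟩
  rintro v ⟨t, a, b, ht, ha, hb, hab, rfl⟩
  apply pow_le_pow_left₀ (abs_nonneg _)
  calc |p.1 _ - q.1 _| ≤ |p.1 _| + |q.1 _| := abs_sub _ _
    _ ≤ ‖p.1‖ + ‖q.1‖ := by
        gcongr
        · exact p.1.norm_coe_le_norm _
        · exact q.1.norm_coe_le_norm _

/-- The diagonal terms are below `supTerm`. -/
lemma le_supTerm (hτb : 0 ≤ τb) (hT : 0 ≤ T) (hK : 0 ≤ Kτ)
    (p q : C(Icc (-τb) T, ℝ) × D) (s : Icc (-τb) T) :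
    |p.1 s - q.1 s| ^ 2 ≤ supTerm τb T Kτ D p q := by
  apply le_csSup (supTerm_bddAbove p q)
  have hs1 := s.2.1
  have hs2 := s.2.2
  refine ⟨max (s : ℝ) 0, min (s : ℝ) 0, min (s : ℝ) 0,
    ⟨le_max_right _ _, max_le hs2 hT⟩,
    ⟨le_min hs1 (by linarith), min_le_right _ _⟩,
    ⟨le_min hs1 (by linarith), min_le_right _ _⟩,
    by simpa using mul_nonneg hK (norm_nonneg _), ?_⟩
  have hsum : max (s : ℝ) 0 + min (s : ℝ) 0 = (s : ℝ) := by
    rw [max_add_min]; ring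
  suffices h : ∀ (x : ℝ) (hx : x ∈ Icc (-τb) T), x = (s : ℝ) →
      |p.1 s - q.1 s| ^ 2 = |p.1 ⟨x, hx⟩ - q.1 ⟨x, hx⟩| ^ 2 by
    exact h _ _ hsum
  intro x hx he
  subst he
  rw [Subtype.coe_eta]

theorem dT_convergence_iff (hτb : 0 ≤ τb) (hT : 0 ≤ T) (hK : 0 ≤ Kτ) (hD : IsCompact D)
    (u : ℕ → C(Icc (-τb) T, ℝ) × D) (p : C(Icc (-τb) T, ℝ) × D) :
    Filter.Tendsto (fun n => dT τb T Kτ D (u n) p) Filter.atTop (nhds 0) ↔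
      (Filter.Tendsto (fun n => ((u n).2 : EuclideanSpace ℝ (Fin d))) Filter.atTop
          (nhds (p.2 : EuclideanSpace ℝ (Fin d))) ∧
        Filter.Tendsto (fun n => ‖(u n).1 - p.1‖) Filter.atTop (nhds 0)) := by
  set A : ℕ → ℝ := fun n => ‖((u n).2 : EuclideanSpace ℝ (Fin d)) -
      (p.2 : EuclideanSpace ℝ (Fin d))‖ ^ 2 with hA
  set S : ℕ → ℝ := fun n => supTerm τb T Kτ D (u n) p with hS
  have hAnn : ∀ n, 0 ≤ A n := fun n => sq_nonneg _
  have hSnn : ∀ n, 0 ≤ S n := fun n => supTerm_nonneg _ _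
  have hdT : ∀ n, dT τb T Kτ D (u n) p = Real.sqrt (A n + S n) := fun n => rfl
  constructor
  · intro h
    have hsq : Filter.Tendsto (fun n => (dT τb T Kτ D (u n) p) ^ 2)
        Filter.atTop (nhds 0) := by
      simpa using h.pow 2
    have hsum : Filter.Tendsto (fun n => A n + S n) Filter.atTop (nhds 0) := by
      have : ∀ n, (dT τb T Kτ D (u n) p) ^ 2 = A n + S n := fun n => by
        rw [hdT n, Real.sq_sqrt (add_nonneg (hAnn n) (hSnn n))]
      simpa [this] using hsq
    have hA0 : Filter.Tendsto A Filter.atTop (nhds 0) :=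
      tendsto_of_tendsto_of_tendsto_of_le_of_le tendsto_const_nhds hsum
        hAnn (fun n => le_add_of_nonneg_right (hSnn n))
    have hS0 : Filter.Tendsto S Filter.atTop (nhds 0) :=
      tendsto_of_tendsto_of_tendsto_of_le_of_le tendsto_const_nhds hsum
        hSnn (fun n => le_add_of_nonneg_left (hAnn n))
    constructor
    · rw [tendsto_iff_norm_sub_tendsto_zero]
      have : Filter.Tendsto (fun n => Real.sqrt (A n)) Filter.atTop (nhds 0) := by
        have := (Real.continuous_sqrt.tendsto' 0 0 Real.sqrt_zero).comp hA0
        exact this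
      refine this.congr fun n => ?_
      rw [hA, Real.sqrt_sq (norm_nonneg _)]
    · refine tendsto_of_tendsto_of_tendsto_of_le_of_le tendsto_const_nhds
        ((Real.continuous_sqrt.tendsto' 0 0 Real.sqrt_zero).comp hS0)
        (fun n => norm_nonneg _) (fun n => ?_)
      rw [Function.comp_apply]
      rw [ContinuousMap.norm_le _ (Real.sqrt_nonneg _)]
      intro s
      rw [Real.norm_eq_abs, ContinuousMap.sub_apply]
      rw [Real.le_sqrt (abs_nonneg _) (hSnn n)]
      exact le_supTerm hτb hT hK (u n) p s
  · rintro ⟨hr, hx⟩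
    have hr' : Filter.Tendsto (fun n => ‖((u n).2 : EuclideanSpace ℝ (Fin d)) -
        (p.2 : EuclideanSpace ℝ (Fin d))‖) Filter.atTop (nhds 0) :=
      tendsto_iff_norm_sub_tendsto_zero.mp hr
    have hsum : Filter.Tendsto (fun n => A n + S n) Filter.atTop (nhds 0) := by
      rw [Metric.tendsto_nhds]
      intro ε hε
      set δ : ℝ := Real.sqrt ε / 4 with hδ
      have hδpos : 0 < δ := by positivity
      -- uniform continuity of p.1
      have huc : UniformContinuous (p.1 : Icc (-τb) T → ℝ) :=
        CompactSpace.uniformContinuous_of_continuous p.1.continuous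
      obtain ⟨η, hηpos, hη⟩ := Metric.uniformContinuous_iff.mp huc δ hδpos
      have h1 : ∀ᶠ n in Filter.atTop, ‖((u n).2 : EuclideanSpace ℝ (Fin d)) -
          (p.2 : EuclideanSpace ℝ (Fin d))‖ < min (Real.sqrt (ε / 2)) (η / (Kτ + 1)) := by
        refine hr'.eventually_lt_const ?_
        apply lt_min <;> positivity
      have h2 : ∀ᶠ n in Filter.atTop, ‖(u n).1 - p.1‖ < δ := hx.eventually_lt_const hδpos
      filter_upwards [h1, h2] with n hn1 hn2
      have hnormnn : 0 ≤ ‖((u n).2 : EuclideanSpace ℝ (Fin d)) -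
          (p.2 : EuclideanSpace ℝ (Fin d))‖ := norm_nonneg _
      have hAn : A n < ε / 2 := by
        rw [hA]
        calc ‖((u n).2 : EuclideanSpace ℝ (Fin d)) -
            (p.2 : EuclideanSpace ℝ (Fin d))‖ ^ 2 < Real.sqrt (ε / 2) ^ 2 := by
              apply pow_lt_pow_left₀ (lt_of_lt_of_le hn1 (min_le_left _ _)) hnormnn
              norm_num
          _ = ε / 2 := Real.sq_sqrt (by positivity)
      have hKη : Kτ * ‖((u n).2 : EuclideanSpace ℝ (Fin d)) -
          (p.2 : EuclideanSpace ℝ (Fin d))‖ < η := by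
        have hlt : ‖((u n).2 : EuclideanSpace ℝ (Fin d)) -
            (p.2 : EuclideanSpace ℝ (Fin d))‖ < η / (Kτ + 1) :=
          lt_of_lt_of_le hn1 (min_le_right _ _)
        calc Kτ * ‖((u n).2 : EuclideanSpace ℝ (Fin d)) -
            (p.2 : EuclideanSpace ℝ (Fin d))‖
            ≤ Kτ * (η / (Kτ + 1)) := mul_le_mul_of_nonneg_left hlt.le hK
          _ < (Kτ + 1) * (η / (Kτ + 1)) := by
              apply mul_lt_mul_of_pos_right (by linarith) (by positivity)
          _ = η := by field_simp
      have hSn : S n ≤ (2 * δ) ^ 2 := by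
        apply supTerm_le _ _ (by positivity)
        intro s s' hss
        apply pow_le_pow_left₀ (abs_nonneg _)
        have hds : dist s s' < η := by
          rw [Subtype.dist_eq, Real.dist_eq]
          exact lt_of_le_of_lt hss hKη
        have hmid : |p.1 s - p.1 s'| < δ := by
          have := hη hds
          rwa [Real.dist_eq] at this
        have hfirst : |(u n).1 s - p.1 s| < δ := by
          have h := ((u n).1 - p.1).norm_coe_le_norm s
          rw [ContinuousMap.sub_apply, Real.norm_eq_abs] at h
          exact lt_of_le_of_lt h hn2
        calc |(u n).1 s - p.1 s'| =
            |((u n).1 s - p.1 s) + (p.1 s - p.1 s')| := by ring_nf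
          _ ≤ |(u n).1 s - p.1 s| + |p.1 s - p.1 s'| := abs_add_le _ _
          _ ≤ 2 * δ := by linarith
      have hsq : (2 * δ) ^ 2 = ε / 4 := by
        rw [hδ]
        have : (2 * (Real.sqrt ε / 4)) ^ 2 = Real.sqrt ε ^ 2 / 4 := by ring
        rw [this, Real.sq_sqrt hε.le]
      rw [Real.dist_eq, sub_zero, abs_of_nonneg (add_nonneg (hAnn n) (hSnn n))]
      calc A n + S n < ε / 2 + ε / 4 := by
            apply add_lt_add_of_lt_of_le hAn
            rw [← hsq]; exact hSn
        _ < ε := by linarith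
    have : Filter.Tendsto (fun n => Real.sqrt (A n + S n)) Filter.atTop (nhds 0) := by
      have := (Real.continuous_sqrt.tendsto' 0 0 Real.sqrt_zero).comp hsum
      exact this
    exact this.congr fun n => (hdT n).symm
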